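/- Let M be a 2d×2d antisymmetric matrix over a field whose upper-right d×d block N (entries m_{i,d+j} for 1 ≤ i,j ≤ d) is upper triangular, whose lower-right d×d block (entries m_{d+i,d+j}) is zero. Then the Pfaffian of M equals ± the product of the diagonal entries of N, i.e. Pf(M)² = (∏_{i=1}^{d} m_{i,d+i})². -/

import Mathlib

open Matrix

/-- For an antisymmetric block matrix `M = [[E, N], [-Nᵀ, 0]]` over a field with `E`
antisymmetric and `N` upper triangular, any Pfaffian `p` of `M` (characterized by
`p² = det M`) satisfies `p² = (∏ i, N i i)²`. -/
theorem pfaffian_sq_of_upper_triangular_block {d : ℕ} {K : Type*} [Field K]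
    (E N : Matrix (Fin d) (Fin d) K)
    (hE : Eᵀ = -E)
    (hN : ∀ i j : Fin d, j < i → N i j = 0)
    (p : K) (hp : p ^ 2 = (Matrix.fromBlocks E N (-Nᵀ) 0).det) :
    p ^ 2 = (∏ i : Fin d, N i i) ^ 2 := by
  have hdetN : N.det = ∏ i : Fin d, N i i := by
    have h := Matrix.det_of_upperTriangular (M := N) (fun i j h => hN i j h)
    simpa [Matrix.diag] using h
  -- J = [[0,1],[1,0]]
  set J : Matrix (Fin d ⊕ Fin d) (Fin d ⊕ Fin d) K := fromBlocks 0 1 1 0 with hJdef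
  have hJ : J.det = (-1 : K) ^ d := by
    have h1 : (fromBlocks 1 0 1 1 : Matrix (Fin d ⊕ Fin d) (Fin d ⊕ Fin d) K) * J = (fromBlocks 0 1 1 1 : Matrix (Fin d ⊕ Fin d) (Fin d ⊕ Fin d) K) := by
      rw [hJdef, fromBlocks_multiply]; simp
    have h2 : (fromBlocks 1 0 1 1 : Matrix (Fin d ⊕ Fin d) (Fin d ⊕ Fin d) K).det = 1 := by
      rw [det_fromBlocks_zero₁₂]; simp
    have h3 : (fromBlocks 0 1 1 1 : Matrix (Fin d ⊕ Fin d) (Fin d ⊕ Fin d) K).det = (-1:K)^d := by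
      rw [det_fromBlocks_one₂₂]
      simp [Matrix.det_neg, Fintype.card_fin]
    have := congrArg Matrix.det h1
    rw [det_mul, h2, one_mul, h3] at this
    exact this
  have hmul : (fromBlocks E N (-Nᵀ) 0) * J = fromBlocks N E 0 (-Nᵀ) := by
    rw [hJdef, fromBlocks_multiply]
    simp
  have key : (fromBlocks E N (-Nᵀ) 0).det * J.det = N.det * (-Nᵀ).det := by
    rw [← det_mul, hmul, det_fromBlocks_zero₂₁]
  have hNT : (-Nᵀ).det = (-1 : K) ^ d * N.det := by
    rw [Matrix.det_neg, Matrix.det_transpose, Fintype.card_fin]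
  rw [hJ, hNT] at key
  have hsign : ((-1 : K) ^ d) * ((-1 : K) ^ d) = 1 := by
    rw [← pow_add, ← two_mul, pow_mul]; norm_num
  have : (fromBlocks E N (-Nᵀ) 0).det = N.det * N.det := by
    have := key
    field_simp at this ⊢
    calc (fromBlocks E N (-Nᵀ) 0).det
        = (fromBlocks E N (-Nᵀ) 0).det * (((-1:K)^d) * ((-1:K)^d)) := by rw [hsign, mul_one]
      _ = ((fromBlocks E N (-Nᵀ) 0).det * ((-1:K)^d)) * ((-1:K)^d) := by ring
      _ = (N.det * ((-1:K)^d * N.det)) * ((-1:K)^d) := by rw [this]; ring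
      _ = N.det * N.det * (((-1:K)^d) * ((-1:K)^d)) := by ring
      _ = N.det ^ 2 := by rw [hsign, mul_one, sq]
  rw [hp, this, hdetN, sq]
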